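/- arXiv:2405.04850 — 3 statements merged into one kernel-verified Lean document; each statement's English description precedes it below -/
import Mathlib

section
/- Let ℰ be a Hilbert 𝒜-module over a C*-algebra 𝒜, let 𝒧 be a subset of ℰ, and let ω, ω_1, …, ω_n be positive linear functionals on 𝒜 such that ω = ∑_{j=1}^n λ_j ω_j with λ_j > 0 and ∑_{j=1}^n λ_j = 1. Then the closure of ι_ω(𝒧) in ℰ_ω equals the set of all z̃ ∈ ℰ_ω for which there exists a sequence {x_k} ⊆ 𝒧 such that lim_k (x_k + 𝒩_{ω_j}) = φ_j(z̃) in ℰ_{ω_j} for each 1 ≤ j ≤ n. -/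
open scoped ComplexOrder InnerProductSpace RightActions
open Filter

/-- The class `CStarModule` as it stood in Mathlib (December 2024): a right Hilbert `A`-module,
with `A` acting through `Aᵐᵒᵖ`. Mathlib's `CStarModule` is now stated for a left action. -/
class RightCStarModule (A E : Type*) [NonUnitalSemiring A] [StarRing A] [Module ℂ A]
    [AddCommGroup E] [Module ℂ E] [PartialOrder A] [SMul Aᵐᵒᵖ E] [Norm A] [Norm E]
    extends Inner A E where
  inner_add_right {x} {y} {z} : inner x (y + z) = inner x y + inner x z
  inner_self_nonneg {x} : 0 ≤ inner x x
  inner_self {x} : inner x x = 0 ↔ x = 0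
  inner_op_smul_right {a : A} {x y : E} : inner x (y <• a) = inner x y * a
  inner_smul_right_complex {z : ℂ} {x} {y} : inner x (z • y) = z • inner x y
  star_inner x y : star (inner x y) = inner y x
  norm_eq_sqrt_norm_inner_self x : ‖x‖ = √‖inner x x‖

/-- **Theorem 2.2.** Let `𝒧 ⊆ ℰ` and `ω = ∑_{j=1}^n λ_j ω_j` with `λ_j > 0`,
`∑ λ_j = 1`, `ω_j` positive linear functionals.  Then the closure of `ι_ω(𝒧)` in `ℰ_ω`
equals the set of `z̃ ∈ ℰ_ω` for which there is a sequence `{x_k} ⊆ 𝒧` with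
`lim_k (x_k + 𝒩_{ω_j}) = φ_j(z̃)` in `ℰ_{ω_j}` for each `1 ≤ j ≤ n`.  The localizations are
modelled abstractly, and `φ_j` is determined by `φ_j ∘ ι_ω = ι_{ω_j}`. -/
theorem closure_image_eq_of_finite_convex_combination
    {A E : Type*} [NonUnitalCStarAlgebra A] [PartialOrder A] [StarOrderedRing A]
    [NormedAddCommGroup E] [NormedSpace ℂ E] [SMul Aᵐᵒᵖ E] [RightCStarModule A E] [CompleteSpace E]
    (L : Set E)
    (n : ℕ) (lam : Fin n → ℝ) (hlam : ∀ j, 0 < lam j) (hlam1 : ∑ j, lam j = 1)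
    (ω : A →L[ℂ] ℂ) (ωs : Fin n → (A →L[ℂ] ℂ))
    (hpos : ∀ j (a : A), 0 ≤ a → 0 ≤ ωs j a)
    (hω : ∀ a : A, ω a = ∑ j, (lam j : ℂ) * ωs j a)
    -- an abstract model of the localization `ℰ_ω`
    (F : Type*) [NormedAddCommGroup F] [InnerProductSpace ℂ F] [CompleteSpace F]
    (ι : E →ₗ[ℂ] F) (hι : DenseRange ι)
    (hinner : ∀ x y : E, ⟪ι x, ι y⟫_ℂ = ω ⟪x, y⟫_A)
    -- abstract models of the localizations `ℰ_{ω_j}`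
    (Fj : Fin n → Type*) [∀ j, NormedAddCommGroup (Fj j)] [∀ j, InnerProductSpace ℂ (Fj j)]
    [∀ j, CompleteSpace (Fj j)]
    (ιj : ∀ j, E →ₗ[ℂ] Fj j) (hιj : ∀ j, DenseRange (ιj j))
    (hinnerj : ∀ j (x y : E), ⟪ιj j x, ιj j y⟫_ℂ = ωs j ⟪x, y⟫_A)
    -- the maps `φ_j`
    (φ : ∀ j, F →L[ℂ] Fj j) (hφ : ∀ j (x : E), φ j (ι x) = ιj j x) :
    closure (ι '' L) =
      {z : F | ∃ x : ℕ → E, (∀ k, x k ∈ L) ∧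
        ∀ j, Tendsto (fun k => ιj j (x k)) atTop (nhds (φ j z))} := by

  -- Key identity: ‖v‖² = ∑ λⱼ ‖φⱼ v‖² for all v in F
  have key : ∀ v : F, ‖v‖ ^ 2 = ∑ j, lam j * ‖φ j v‖ ^ 2 := by
    have hc1 : Continuous fun v : F => ‖v‖ ^ 2 := by continuity
    have hc2 : Continuous fun v : F => ∑ j, lam j * ‖φ j v‖ ^ 2 := by
      apply continuous_finset_sum
      intro j _
      exact continuous_const.mul (((φ j).continuous.norm).pow 2)
    have heq : (fun v : F => ‖v‖ ^ 2) = fun v : F => ∑ j, lam j * ‖φ j v‖ ^ 2 := by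
      refine Continuous.ext_on hι hc1 hc2 ?_
      rintro v ⟨x, rfl⟩
      simp only [hφ]
      have h1 : (⟪ι x, ι x⟫_ℂ) = ∑ j, (lam j : ℂ) * ⟪ιj j x, ιj j x⟫_ℂ := by
        rw [hinner, hω]
        exact Finset.sum_congr rfl fun j _ => by rw [hinnerj]
      have h2 : ((‖ι x‖ ^ 2 : ℝ) : ℂ) = ((∑ j, lam j * ‖ιj j x‖ ^ 2 : ℝ) : ℂ) := by
        push_cast
        simpa [inner_self_eq_norm_sq_to_K] using h1
      exact_mod_cast h2
    exact fun v => congrFun heq v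
  ext z
  simp only [Set.mem_setOf_eq]
  constructor
  · intro hz
    obtain ⟨y, hy, hyt⟩ := mem_closure_iff_seq_limit.mp hz
    choose x hxL hxy using hy
    refine ⟨x, hxL, fun j => ?_⟩
    have h := ((φ j).continuous.tendsto z).comp hyt
    have heq : (fun k => ιj j (x k)) = (φ j) ∘ y := by
      funext k
      simp [Function.comp, ← hxy k, hφ]
    rw [heq]
    exact h
  · rintro ⟨x, hxL, hlim⟩
    have hcau : CauchySeq fun k => ι (x k) := by
      rw [Metric.cauchySeq_iff]
      intro ε hε
      have hj : ∀ j, ∃ N, ∀ k ≥ N, ∀ m ≥ N,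
          dist (ιj j (x k)) (ιj j (x m)) < ε / 2 :=
        fun j => Metric.cauchySeq_iff.mp (hlim j).cauchySeq (ε / 2) (by linarith)
      choose N hN using hj
      refine ⟨Finset.univ.sup N, fun k hk m hm => ?_⟩
      have hd2 : dist (ι (x k)) (ι (x m)) ^ 2
          = ∑ j, lam j * dist (ιj j (x k)) (ιj j (x m)) ^ 2 := by
        have h := key (ι (x k) - ι (x m))
        simpa [dist_eq_norm, map_sub, hφ] using h
      have hle : dist (ι (x k)) (ι (x m)) ^ 2 ≤ (ε / 2) ^ 2 := by
        rw [hd2]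
        calc ∑ j, lam j * dist (ιj j (x k)) (ιj j (x m)) ^ 2
            ≤ ∑ j, lam j * (ε / 2) ^ 2 := by
              refine Finset.sum_le_sum fun j _ => ?_
              have hdj : dist (ιj j (x k)) (ιj j (x m)) < ε / 2 :=
                hN j k (le_trans (Finset.le_sup (Finset.mem_univ j)) hk) m
                  (le_trans (Finset.le_sup (Finset.mem_univ j)) hm)
              have hd0 := dist_nonneg (x := ιj j (x k)) (y := ιj j (x m))
              have hsq : dist (ιj j (x k)) (ιj j (x m)) ^ 2 ≤ (ε / 2) ^ 2 := by nlinarith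
              exact mul_le_mul_of_nonneg_left hsq (hlam j).le
          _ = (ε / 2) ^ 2 := by rw [← Finset.sum_mul, hlam1, one_mul]
      have : dist (ι (x k)) (ι (x m)) ^ 2 < ε ^ 2 := by nlinarith
      exact lt_of_pow_lt_pow_left₀ 2 hε.le this
    obtain ⟨w, hw⟩ := cauchySeq_tendsto_of_complete hcau
    have hwz : w = z := by
      have hφeq : ∀ j, φ j w = φ j z := by
        intro j
        have h1 : Tendsto (fun k => ιj j (x k)) atTop (nhds (φ j w)) := by
          have h := ((φ j).continuous.tendsto w).comp hw
          simpa [Function.comp_def, hφ] using h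
        exact tendsto_nhds_unique h1 (hlim j)
      have h := key (w - z)
      have h0 : ‖w - z‖ ^ 2 = 0 := by
        rw [h]
        refine Finset.sum_eq_zero fun j _ => ?_
        simp [map_sub, hφeq j, sub_self]
      have : ‖w - z‖ = 0 := by
        have := norm_nonneg (w - z)
        nlinarith
      rw [norm_eq_zero, sub_eq_zero] at this
      exact this
    rw [← hwz]
    exact mem_closure_of_tendsto hw (Filter.Eventually.of_forall fun k => ⟨x k, hxL k, rfl⟩)
end

section
/- Let ℰ be a Hilbert 𝒜-module over a C*-algebra 𝒜, and let ℋ and 𝒦 be closed submodules of ℰ such that ℋ ∩ 𝒦 is orthogonally complemented in ℰ. Let ω_1, …, ω_n be positive linear functionals on 𝒜 such that, for each j, the closure of ι_{ω_j}(ℋ ∩ 𝒦) in ℰ_{ω_j} equals the intersection of the closures of ι_{ω_j}(ℋ) and ι_{ω_j}(𝒦) in ℰ_{ω_j}. Then for every ω in the convex hull of {ω_1, …, ω_n}, the closure of ι_ω(ℋ ∩ 𝒦) in ℰ_ω equals the intersection of the closures of ι_ω(ℋ) and ι_ω(𝒦) in ℰ_ω. -/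
open scoped ComplexOrder InnerProductSpace RightActions

universe v

/-- **Corollary 2.4.** Let `ℋ, 𝒦` be closed submodules of `ℰ` with `ℋ ∩ 𝒦`
orthogonally complemented, and let `ω_1, …, ω_n` be positive linear functionals such that
`closure ι_{ω_j}(ℋ ∩ 𝒦) = closure ι_{ω_j}(ℋ) ∩ closure ι_{ω_j}(𝒦)` for each `j`.  Then the
same equality holds for every `ω` in the convex hull of `{ω_1, …, ω_n}`; here the
localization of any such `ω` is modelled abstractly by an arbitrary Hilbert space `F` with
a densely-ranged map `ι` satisfying `(ι x, ι y) = ω⟨x,y⟩`. -/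
theorem closure_inter_localization_of_convexHull
    {A E : Type*} [NonUnitalCStarAlgebra A] [PartialOrder A] [StarOrderedRing A]
    [NormedAddCommGroup E] [NormedSpace ℂ E] [SMul Aᵐᵒᵖ E] [RightCStarModule A E] [CompleteSpace E]
    -- `ℋ` and `𝒦` are closed submodules of `ℰ`
    (H K : Submodule ℂ E) (hHclosed : IsClosed (H : Set E)) (hKclosed : IsClosed (K : Set E))
    (hHA : ∀ (a : A) (x : E), x ∈ H → x <• a ∈ H)
    (hKA : ∀ (a : A) (x : E), x ∈ K → x <• a ∈ K)
    -- `ℋ ∩ 𝒦` is orthogonally complemented in `ℰ`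
    (hcompl : ∀ x : E, ∃ y ∈ H ⊓ K, ∃ z : E,
      (∀ w ∈ H ⊓ K, ⟪w, z⟫_A = 0) ∧ x = y + z)
    -- the positive linear functionals `ω_1, …, ω_n`
    (n : ℕ) (ωs : Fin n → (A →L[ℂ] ℂ))
    (hpos : ∀ j (a : A), 0 ≤ a → 0 ≤ ωs j a)
    -- abstract models of the localizations `ℰ_{ω_j}`
    (Fj : Fin n → Type*) [∀ j, NormedAddCommGroup (Fj j)] [∀ j, InnerProductSpace ℂ (Fj j)]
    [∀ j, CompleteSpace (Fj j)]
    (ιj : ∀ j, E →ₗ[ℂ] Fj j) (hιj : ∀ j, DenseRange (ιj j))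
    (hinnerj : ∀ j (x y : E), ⟪ιj j x, ιj j y⟫_ℂ = ωs j ⟪x, y⟫_A)
    -- the hypothesis `(ℋ ∩ 𝒦)_{ω_j} = ℋ_{ω_j} ∩ 𝒦_{ω_j}` for each `j`
    (hj : ∀ j, closure (ιj j '' ((H ⊓ K : Submodule ℂ E) : Set E)) =
      closure (ιj j '' (H : Set E)) ∩ closure (ιj j '' (K : Set E))) :
    -- conclusion: the same holds for every `ω` in the convex hull of `{ω_1, …, ω_n}`
    ∀ (lam : Fin n → ℝ), (∀ j, 0 ≤ lam j) → ∑ j, lam j = 1 →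
    ∀ (ω : A →L[ℂ] ℂ), (∀ a : A, ω a = ∑ j, (lam j : ℂ) * ωs j a) →
    ∀ (F : Type v) [NormedAddCommGroup F] [InnerProductSpace ℂ F] [CompleteSpace F]
      (ι : E →ₗ[ℂ] F), DenseRange ι → (∀ x y : E, ⟪ι x, ι y⟫_ℂ = ω ⟪x, y⟫_A) →
      closure (ι '' ((H ⊓ K : Submodule ℂ E) : Set E)) =
        closure (ι '' (H : Set E)) ∩ closure (ι '' (K : Set E)) := by
  intro lam hlam hsum ω hω F _ _ _ ι hdense hinner
  classical
  -- norm identity: ‖ι x‖² = ∑ j, lam j * ‖ιj j x‖²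
  have hnorm : ∀ x : E, ‖ι x‖ ^ 2 = ∑ j, lam j * ‖ιj j x‖ ^ 2 := by
    intro x
    have h1 : (⟪ι x, ι x⟫_ℂ) = ∑ j, (lam j : ℂ) * ⟪ιj j x, ιj j x⟫_ℂ := by
      rw [hinner, hω]
      exact Finset.sum_congr rfl fun j _ => by rw [hinnerj]
    simp only [inner_self_eq_norm_sq_to_K] at h1
    have h3 : ((‖ι x‖ ^ 2 : ℝ) : ℂ) = ((∑ j, lam j * ‖ιj j x‖ ^ 2 : ℝ) : ℂ) := by
      rw [Complex.ofReal_sum]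
      simp only [Complex.ofReal_mul, Complex.ofReal_pow]
      exact h1
    exact_mod_cast h3
  have hle : ∀ (j : Fin n) (x : E), lam j * ‖ιj j x‖ ^ 2 ≤ ‖ι x‖ ^ 2 := by
    intro j x
    rw [hnorm]
    exact Finset.single_le_sum (f := fun k => lam k * ‖ιj k x‖ ^ 2)
      (fun k _ => mul_nonneg (hlam k) (sq_nonneg _)) (Finset.mem_univ j)
  -- key claim: if z ⊥ (H ⊓ K) then ι z ⊥ f for any f in both closures
  have hzf : ∀ z : E, (∀ w ∈ H ⊓ K, ⟪w, z⟫_A = 0) → ∀ f : F,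
      f ∈ closure (ι '' (H : Set E)) → f ∈ closure (ι '' (K : Set E)) →
      ⟪ι z, f⟫_ℂ = 0 := by
    intro z hz f hfH hfK
    obtain ⟨uh, huh, hth⟩ := mem_closure_iff_seq_limit.mp hfH
    obtain ⟨uk, huk, htk⟩ := mem_closure_iff_seq_limit.mp hfK
    choose h hhH hheq using huh
    choose k hkK hkeq using huk
    have hth' : Filter.Tendsto (fun m => ι (h m)) Filter.atTop (nhds f) := by
      simpa only [hheq] using hth
    have htk' : Filter.Tendsto (fun m => ι (k m)) Filter.atTop (nhds f) := by
      simpa only [hkeq] using htk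
    -- each term tends to 0
    have hterm : ∀ j : Fin n,
        Filter.Tendsto (fun m => (lam j : ℂ) * ⟪ιj j z, ιj j (h m)⟫_ℂ)
          Filter.atTop (nhds 0) := by
      intro j
      rcases eq_or_lt_of_le (hlam j) with h0 | hpos
      · simp [← h0]
      · -- distance comparison
        have hcmp : ∀ x y : E,
            Real.sqrt (lam j) * ‖ιj j x - ιj j y‖ ≤ ‖ι x - ι y‖ := by
          intro x y
          have h1 : lam j * ‖ιj j (x - y)‖ ^ 2 ≤ ‖ι (x - y)‖ ^ 2 := hle j (x - y)
          rw [map_sub, map_sub] at h1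
          have h2 : (Real.sqrt (lam j) * ‖ιj j x - ιj j y‖) ^ 2 ≤ ‖ι x - ι y‖ ^ 2 := by
            rw [mul_pow, Real.sq_sqrt (le_of_lt hpos)]
            exact h1
          have h3 : 0 ≤ Real.sqrt (lam j) * ‖ιj j x - ιj j y‖ :=
            mul_nonneg (Real.sqrt_nonneg _) (norm_nonneg _)
          nlinarith [norm_nonneg (ι x - ι y)]
        have hsq : (0:ℝ) < Real.sqrt (lam j) := Real.sqrt_pos.mpr hpos
        have hcau : ∀ u : ℕ → E, CauchySeq (fun m => ι (u m)) →
            CauchySeq (fun m => ιj j (u m)) := by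
          intro u hu
          rw [Metric.cauchySeq_iff] at hu ⊢
          intro ε hε
          obtain ⟨N, hN⟩ := hu (Real.sqrt (lam j) * ε) (mul_pos hsq hε)
          refine ⟨N, fun a ha b hb => ?_⟩
          have h1 := hN a ha b hb
          rw [dist_eq_norm] at h1 ⊢
          have h2 := hcmp (u a) (u b)
          nlinarith
        obtain ⟨g, hg⟩ := cauchySeq_tendsto_of_complete (hcau h hth'.cauchySeq)
        obtain ⟨g', hg'⟩ := cauchySeq_tendsto_of_complete (hcau k htk'.cauchySeq)
        -- g = g'
        have hdiff : Filter.Tendsto (fun m => ιj j (h m) - ιj j (k m))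
            Filter.atTop (nhds 0) := by
          have h0 : Filter.Tendsto (fun m => ‖ι (h m) - ι (k m)‖)
              Filter.atTop (nhds 0) := by
            have := (hth'.sub htk').norm
            simpa using this
          rw [tendsto_zero_iff_norm_tendsto_zero]
          refine squeeze_zero (g := fun m => ‖ι (h m) - ι (k m)‖ / Real.sqrt (lam j))
            (fun m => norm_nonneg _) (fun m => ?_) ?_
          · show ‖ιj j (h m) - ιj j (k m)‖ ≤ ‖ι (h m) - ι (k m)‖ / Real.sqrt (lam j)
            rw [le_div_iff₀ hsq, mul_comm]
            exact hcmp (h m) (k m)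
          · have := h0.div_const (Real.sqrt (lam j))
            simpa using this
        have hgg' : g = g' := by
          have h1 : Filter.Tendsto (fun m => ιj j (h m) - ιj j (k m))
              Filter.atTop (nhds (g - g')) := hg.sub hg'
          have h2 := tendsto_nhds_unique h1 hdiff
          exact sub_eq_zero.mp h2
        have hgH : g ∈ closure (ιj j '' (H : Set E)) :=
          mem_closure_of_tendsto hg
            (Filter.Eventually.of_forall fun m => Set.mem_image_of_mem _ (hhH m))
        have hgK : g ∈ closure (ιj j '' (K : Set E)) := by
          rw [hgg']
          exact mem_closure_of_tendsto hg'
            (Filter.Eventually.of_forall fun m => Set.mem_image_of_mem _ (hkK m))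
        have hgHK : g ∈ closure (ιj j '' ((H ⊓ K : Submodule ℂ E) : Set E)) := by
          rw [hj j]
          exact ⟨hgH, hgK⟩
        have hzg : ⟪ιj j z, g⟫_ℂ = 0 := by
          have hcl : IsClosed {v : Fj j | ⟪ιj j z, v⟫_ℂ = 0} :=
            isClosed_eq (Continuous.inner continuous_const continuous_id) continuous_const
          refine hcl.closure_subset_iff.mpr ?_ hgHK
          rintro v ⟨w, hw, rfl⟩
          show ⟪ιj j z, ιj j w⟫_ℂ = 0
          rw [hinnerj]
          have hzw : ⟪z, w⟫_A = 0 := by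
            rw [← RightCStarModule.star_inner, hz w hw, star_zero]
          rw [hzw, map_zero]
        have h1 : Filter.Tendsto (fun m => ⟪ιj j z, ιj j (h m)⟫_ℂ)
            Filter.atTop (nhds ⟪ιj j z, g⟫_ℂ) := tendsto_const_nhds.inner hg
        rw [hzg] at h1
        have := h1.const_mul (lam j : ℂ)
        simpa using this
    have hsumt : Filter.Tendsto (fun m => ∑ j, (lam j : ℂ) * ⟪ιj j z, ιj j (h m)⟫_ℂ)
        Filter.atTop (nhds 0) := by
      have := tendsto_finset_sum Finset.univ (fun j _ => hterm j)
      simpa using this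
    have heq : ∀ m, ⟪ι z, ι (h m)⟫_ℂ = ∑ j, (lam j : ℂ) * ⟪ιj j z, ιj j (h m)⟫_ℂ := by
      intro m
      rw [hinner, hω]
      exact Finset.sum_congr rfl fun j _ => by rw [hinnerj]
    have h2 : Filter.Tendsto (fun m => ⟪ι z, ι (h m)⟫_ℂ)
        Filter.atTop (nhds ⟪ι z, f⟫_ℂ) := tendsto_const_nhds.inner hth'
    rw [show (fun m => ⟪ι z, ι (h m)⟫_ℂ)
        = fun m => ∑ j, (lam j : ℂ) * ⟪ιj j z, ιj j (h m)⟫_ℂ from funext heq] at h2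
    exact tendsto_nhds_unique h2 hsumt
  -- the closed subspace M = closure ι(H ⊓ K)
  set M : Submodule ℂ F := (Submodule.map (ι : E →ₗ[ℂ] F) (H ⊓ K)).topologicalClosure with hM
  have hMcoe : (M : Set F) = closure (ι '' ((H ⊓ K : Submodule ℂ E) : Set E)) := by
    rw [hM, Submodule.topologicalClosure_coe, Submodule.map_coe]
  haveI : CompleteSpace M := (Submodule.isClosed_topologicalClosure _).completeSpace_coe
  have hmemM : ∀ w ∈ H ⊓ K, ι w ∈ M := fun w hw =>
    Submodule.le_topologicalClosure _ (Submodule.mem_map_of_mem hw)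
  have hperpM : ∀ z : E, (∀ w ∈ H ⊓ K, ⟪w, z⟫_A = 0) → ι z ∈ Mᗮ := by
    intro z hz
    rw [Submodule.mem_orthogonal]
    intro v hv
    have hcl : IsClosed {v : F | ⟪v, ι z⟫_ℂ = 0} :=
      isClosed_eq (Continuous.inner continuous_id continuous_const) continuous_const
    have hsub : ι '' ((H ⊓ K : Submodule ℂ E) : Set E) ⊆ {v : F | ⟪v, ι z⟫_ℂ = 0} := by
      rintro v ⟨w, hw, rfl⟩
      show ⟪ι w, ι z⟫_ℂ = 0
      rw [hinner, hz w hw, map_zero]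
    have hcls := hcl.closure_subset_iff.mpr hsub
    have hv' : v ∈ closure (ι '' ((H ⊓ K : Submodule ℂ E) : Set E)) := by
      rw [← hMcoe]; exact hv
    exact hcls hv'
  refine Set.Subset.antisymm (Set.subset_inter ?_ ?_) ?_
  · exact closure_mono (Set.image_mono fun x hx => (Submodule.mem_inf.mp hx).1)
  · exact closure_mono (Set.image_mono fun x hx => (Submodule.mem_inf.mp hx).2)
  · rintro f ⟨hfH, hfK⟩
    show f ∈ closure (ι '' ((H ⊓ K : Submodule ℂ E) : Set E))
    rw [← hMcoe]
    suffices hf : f ∈ Mᗮᗮ by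
      rw [Submodule.orthogonal_orthogonal] at hf
      exact hf
    rw [Submodule.mem_orthogonal]
    intro d hd
    obtain ⟨u, hu, htu⟩ := mem_closure_iff_seq_limit.mp (hdense d)
    choose x hx using hu
    choose y hy z hzperp hxeq using fun m => hcompl (x m)
    have htu' : Filter.Tendsto (fun m => ι (x m)) Filter.atTop (nhds d) := by
      simpa only [hx] using htu
    set Q : F →L[ℂ] F := M.subtypeL.comp (M.orthogonalProjectionOnto) with hQ
    have hQx : ∀ m, Q (ι (x m)) = ι (y m) := by
      intro m
      have hsplit : ι (x m) = ι (y m) + ι (z m) := by rw [hxeq m, map_add]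
      have h1 : (M.orthogonalProjectionOnto (ι (y m)) : F) = ι (y m) :=
        Submodule.starProjection_eq_self_iff.mpr (hmemM _ (hy m))
      have h2 : M.orthogonalProjectionOnto (ι (z m)) = 0 :=
        Submodule.orthogonalProjectionOnto_apply_of_mem_orthogonal (hperpM _ (hzperp m))
      rw [hsplit]
      simp [hQ, h1, h2]
    have hQd : Q d = 0 := by
      have h2 : M.orthogonalProjectionOnto d = 0 :=
        Submodule.orthogonalProjectionOnto_apply_of_mem_orthogonal hd
      simp [hQ, h2]
    have hy0 : Filter.Tendsto (fun m => ι (y m)) Filter.atTop (nhds 0) := by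
      have := (Q.continuous.tendsto d).comp htu'
      simpa [Function.comp_def, hQx, hQd] using this
    have hz0 : Filter.Tendsto (fun m => ι (z m)) Filter.atTop (nhds d) := by
      have h1 := htu'.sub hy0
      have h2 : ∀ m, ι (x m) - ι (y m) = ι (z m) := by
        intro m
        rw [hxeq m, map_add]
        abel
      simpa only [h2, sub_zero] using h1
    have h3 : Filter.Tendsto (fun m => ⟪ι (z m), f⟫_ℂ) Filter.atTop
        (nhds ⟪d, f⟫_ℂ) := hz0.inner tendsto_const_nhds
    have h4 : ∀ m, ⟪ι (z m), f⟫_ℂ = 0 := fun m => hzf (z m) (hzperp m) f hfH hfK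
    rw [show (fun m => ⟪ι (z m), f⟫_ℂ) = fun _ => (0 : ℂ) from funext h4] at h3
    exact tendsto_nhds_unique h3 tendsto_const_nhds
end

section
/- Let ℰ be a Hilbert 𝒜-module over a C*-algebra 𝒜, let 𝒧 be a convex subset of ℰ, and let ω = ∑_{j=1}^∞ λ_j ω_j, where λ_j > 0, ∑_{j=1}^∞ λ_j = 1, and the ω_j are positive linear functionals on 𝒜 with sup_j ‖ω_j‖ < ∞ (for instance, states). Then the closure of ι_ω(𝒧) in ℰ_ω equals the set of all z̃ ∈ ℰ_ω for which there exists a sequence {x_n} ⊆ 𝒧 such that the sequence {x_n + 𝒩_ω} is bounded in ℰ_ω and lim_n (x_n + 𝒩_{ω_j}) = φ_j(z̃) in ℰ_{ω_j} for every j ≥ 1. -/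
open scoped ComplexOrder InnerProductSpace RightActions
open Filter

set_option maxHeartbeats 1600000

/-- The Hilbert C⋆-module class as it stood in the older Mathlib: a right `A`-module
(`SMul Aᵐᵒᵖ E`) with inner product `A`-linear on the right, `⟪x, y <• a⟫ = ⟪x, y⟫ * a`. -/
class CStarModuleRight (A E : Type*) [NonUnitalSemiring A] [StarRing A] [Module ℂ A]
    [AddCommGroup E] [Module ℂ E] [PartialOrder A] [SMul Aᵐᵒᵖ E] [Norm A] [Norm E]
    extends Inner A E where
  inner_add_right {x} {y} {z} : inner x (y + z) = inner x y + inner x z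
  inner_self_nonneg {x} : 0 ≤ inner x x
  inner_self {x} : inner x x = 0 ↔ x = 0
  inner_op_smul_right {a : A} {x y : E} : inner x (y <• a) = inner x y * a
  inner_smul_right_complex {z : ℂ} {x} {y} : inner x (z • y) = z • inner x y
  star_inner x y : star (inner x y) = inner y x
  norm_eq_sqrt_norm_inner_self x : ‖x‖ = Real.sqrt ‖inner x x‖

/-- Cauchy–Schwarz inequality for infinite sums of nonnegative reals. -/
private lemma tsum_cs {f g : ℕ → ℝ} (hf : ∀ n, 0 ≤ f n) (hg : ∀ n, 0 ≤ g n)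
    (hf2 : Summable fun n => f n ^ 2) (hg2 : Summable fun n => g n ^ 2) :
    Summable (fun n => f n * g n) ∧
      ∑' n, f n * g n ≤ Real.sqrt (∑' n, f n ^ 2) * Real.sqrt (∑' n, g n ^ 2) := by
  have hsum : Summable (fun n => f n * g n) := by
    refine Summable.of_nonneg_of_le (fun n => mul_nonneg (hf n) (hg n)) (fun n => ?_)
      ((hf2.add hg2).div_const 2)
    nlinarith [sq_nonneg (f n - g n)]
  refine ⟨hsum, Summable.tsum_le_of_sum_le hsum fun s => ?_⟩
  calc ∑ i ∈ s, f i * g i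
      ≤ Real.sqrt (∑ i ∈ s, f i ^ 2) * Real.sqrt (∑ i ∈ s, g i ^ 2) :=
        Real.sum_mul_le_sqrt_mul_sqrt s f g
    _ ≤ Real.sqrt (∑' n, f n ^ 2) * Real.sqrt (∑' n, g n ^ 2) :=
        mul_le_mul (Real.sqrt_le_sqrt (Summable.sum_le_tsum s (fun i _ => sq_nonneg _) hf2))
          (Real.sqrt_le_sqrt (Summable.sum_le_tsum s (fun i _ => sq_nonneg _) hg2))
          (Real.sqrt_nonneg _) (Real.sqrt_nonneg _)

/-- **Theorem 2.5.** Let `𝒧` be a convex subset of `ℰ` and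
`ω = ∑_{j=1}^∞ λ_j ω_j` with `λ_j > 0`, `∑ λ_j = 1`, and `ω_j` positive linear functionals
with `sup_j ‖ω_j‖ < ∞`.  Then `closure ι_ω(𝒧)` equals the set of `z̃ ∈ ℰ_ω` for which
there is a sequence `{x_n} ⊆ 𝒧` with `{x_n + 𝒩_ω}` bounded in `ℰ_ω` and
`lim_n (x_n + 𝒩_{ω_j}) = φ_j(z̃)` in `ℰ_{ω_j}` for every `j ≥ 1`. -/
theorem closure_image_eq_of_sigma_convex_combination
    {A E : Type*} [NonUnitalCStarAlgebra A] [PartialOrder A] [StarOrderedRing A]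
    [NormedAddCommGroup E] [NormedSpace ℂ E] [SMul Aᵐᵒᵖ E] [CStarModuleRight A E] [CompleteSpace E]
    -- `𝒧` is a convex subset of `ℰ`
    (L : Set E) (hL : Convex ℝ L)
    (lam : ℕ → ℝ) (hlam : ∀ j, 0 < lam j) (hlam1 : HasSum lam 1)
    (ω : A →L[ℂ] ℂ) (ωs : ℕ → (A →L[ℂ] ℂ))
    (hpos : ∀ j (a : A), 0 ≤ a → 0 ≤ ωs j a)
    (hbdd : ∃ C : ℝ, ∀ j, ‖ωs j‖ ≤ C)
    (hω : ∀ a : A, HasSum (fun j => (lam j : ℂ) * ωs j a) (ω a))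
    -- an abstract model of the localization `ℰ_ω`
    (F : Type*) [NormedAddCommGroup F] [InnerProductSpace ℂ F] [CompleteSpace F]
    (ι : E →ₗ[ℂ] F) (hι : DenseRange ι)
    (hinner : ∀ x y : E, ⟪ι x, ι y⟫_ℂ = ω ⟪x, y⟫_A)
    -- abstract models of the localizations `ℰ_{ω_j}`
    (Fj : ℕ → Type*) [∀ j, NormedAddCommGroup (Fj j)] [∀ j, InnerProductSpace ℂ (Fj j)]
    [∀ j, CompleteSpace (Fj j)]
    (ιj : ∀ j, E →ₗ[ℂ] Fj j) (hιj : ∀ j, DenseRange (ιj j))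
    (hinnerj : ∀ j (x y : E), ⟪ιj j x, ιj j y⟫_ℂ = ωs j ⟪x, y⟫_A)
    -- the maps `φ_j`
    (φ : ∀ j, F →L[ℂ] Fj j) (hφ : ∀ j (x : E), φ j (ι x) = ιj j x) :
    closure (ι '' L) =
      {z : F | ∃ x : ℕ → E, (∀ k, x k ∈ L) ∧ (∃ C : ℝ, ∀ k, ‖ι (x k)‖ ≤ C) ∧
        ∀ j, Tendsto (fun k => ιj j (x k)) atTop (nhds (φ j z))} := by
  classical
  -- Parseval-type identities
  have hB : ∀ y x : E, HasSum (fun j => (lam j : ℂ) * ⟪ιj j y, ιj j x⟫_ℂ) ⟪ι y, ι x⟫_ℂ := by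
    intro y x
    have h := hω ⟪y, x⟫_A
    rw [← hinner y x] at h
    simp only [← hinnerj] at h
    exact h
  have hA : ∀ x : E, HasSum (fun j => lam j * ‖ιj j x‖ ^ 2) (‖ι x‖ ^ 2) := by
    intro x
    have h := hB x x
    simp only [inner_self_eq_norm_sq_to_K] at h
    have h2 : HasSum (fun j => ((lam j * ‖ιj j x‖ ^ 2 : ℝ) : ℂ)) ((‖ι x‖ ^ 2 : ℝ) : ℂ) := by
      convert h using 2 with j
      all_goals push_cast; rfl
    exact Complex.hasSum_ofReal.mp h2
  -- bound for the maps φ j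
  have hCfin : ∀ (s : Finset ℕ) (w : F), ∑ j ∈ s, lam j * ‖φ j w‖ ^ 2 ≤ ‖w‖ ^ 2 := by
    intro s
    have hclosed : IsClosed {w : F | ∑ j ∈ s, lam j * ‖φ j w‖ ^ 2 ≤ ‖w‖ ^ 2} := by
      apply isClosed_le
      · exact continuous_finset_sum s fun j _ =>
          continuous_const.mul (((φ j).continuous.norm).pow 2)
      · exact continuous_norm.pow 2
    intro w
    refine DenseRange.induction_on hι w hclosed fun a => ?_
    simp only [Set.mem_setOf_eq, hφ]
    calc ∑ j ∈ s, lam j * ‖ιj j a‖ ^ 2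
        ≤ ∑' j, lam j * ‖ιj j a‖ ^ 2 :=
          Summable.sum_le_tsum s (fun j _ => mul_nonneg (hlam j).le (sq_nonneg _)) (hA a).summable
      _ = ‖ι a‖ ^ 2 := (hA a).tsum_eq
  have hCsummable : ∀ w : F, Summable (fun j => lam j * ‖φ j w‖ ^ 2) := fun w =>
    summable_of_sum_le (Pi.le_def.mpr fun j => mul_nonneg (hlam j).le (sq_nonneg _))
      (fun u => hCfin u w)
  have hCtsum : ∀ w : F, ∑' j, lam j * ‖φ j w‖ ^ 2 ≤ ‖w‖ ^ 2 := fun w =>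
    Summable.tsum_le_of_sum_le (hCsummable w) (fun s => hCfin s w)
  -- norm bound on individual terms
  have hnormterm : ∀ (j : ℕ) (u v : Fj j), ‖(lam j : ℂ) * ⟪u, v⟫_ℂ‖
      ≤ (Real.sqrt (lam j) * ‖u‖) * (Real.sqrt (lam j) * ‖v‖) := by
    intro j u v
    have h1 : Real.sqrt (lam j) * Real.sqrt (lam j) = lam j := Real.mul_self_sqrt (hlam j).le
    calc ‖(lam j : ℂ) * ⟪u, v⟫_ℂ‖ = lam j * ‖⟪u, v⟫_ℂ‖ := by
          rw [norm_mul, Complex.norm_real, Real.norm_eq_abs, abs_of_pos (hlam j)]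
      _ ≤ lam j * (‖u‖ * ‖v‖) :=
          mul_le_mul_of_nonneg_left (norm_inner_le_norm (𝕜 := ℂ) u v) (hlam j).le
      _ = (Real.sqrt (lam j) * ‖u‖) * (Real.sqrt (lam j) * ‖v‖) := by
          conv_lhs => rw [← h1]
          ring
  -- summability of the square sequences
  have hsqf : ∀ y : E, Summable (fun j => (Real.sqrt (lam j) * ‖ιj j y‖) ^ 2) := by
    intro y
    exact (summable_congr fun j => by
      rw [mul_pow, Real.sq_sqrt (hlam j).le]).mpr (hA y).summable
  have hsqg : ∀ w : F, Summable (fun j => (Real.sqrt (lam j) * ‖φ j w‖) ^ 2) := by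
    intro w
    exact (summable_congr fun j => by
      rw [mul_pow, Real.sq_sqrt (hlam j).le]).mpr (hCsummable w)
  have hDsummable : ∀ (y : E) (w : F),
      Summable (fun j => (lam j : ℂ) * ⟪ιj j y, φ j w⟫_ℂ) := by
    intro y w
    have key := (tsum_cs (f := fun j => Real.sqrt (lam j) * ‖ιj j y‖)
      (g := fun j => Real.sqrt (lam j) * ‖φ j w‖)
      (fun j => mul_nonneg (Real.sqrt_nonneg _) (norm_nonneg _))
      (fun j => mul_nonneg (Real.sqrt_nonneg _) (norm_nonneg _)) (hsqf y) (hsqg w)).1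
    exact Summable.of_norm (Summable.of_nonneg_of_le (fun j => norm_nonneg _)
      (fun j => hnormterm j _ _) key)
  have hDbound : ∀ (y : E) (w : F),
      ‖∑' j, (lam j : ℂ) * ⟪ιj j y, φ j w⟫_ℂ‖ ≤ ‖ι y‖ * ‖w‖ := by
    intro y w
    obtain ⟨hcs, hcb⟩ := tsum_cs (f := fun j => Real.sqrt (lam j) * ‖ιj j y‖)
      (g := fun j => Real.sqrt (lam j) * ‖φ j w‖)
      (fun j => mul_nonneg (Real.sqrt_nonneg _) (norm_nonneg _))
      (fun j => mul_nonneg (Real.sqrt_nonneg _) (norm_nonneg _)) (hsqf y) (hsqg w)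
    have hns : Summable (fun j => ‖(lam j : ℂ) * ⟪ιj j y, φ j w⟫_ℂ‖) :=
      Summable.of_nonneg_of_le (fun j => norm_nonneg _) (fun j => hnormterm j _ _) hcs
    have e1 : ∑' j, (Real.sqrt (lam j) * ‖ιj j y‖) ^ 2 = ‖ι y‖ ^ 2 := by
      rw [tsum_congr (fun j => by rw [mul_pow, Real.sq_sqrt (hlam j).le])]
      exact (hA y).tsum_eq
    have e2 : ∑' j, (Real.sqrt (lam j) * ‖φ j w‖) ^ 2 ≤ ‖w‖ ^ 2 := by
      rw [tsum_congr (fun j => by rw [mul_pow, Real.sq_sqrt (hlam j).le])]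
      exact hCtsum w
    calc ‖∑' j, (lam j : ℂ) * ⟪ιj j y, φ j w⟫_ℂ‖
        ≤ ∑' j, ‖(lam j : ℂ) * ⟪ιj j y, φ j w⟫_ℂ‖ := norm_tsum_le_tsum_norm hns
      _ ≤ ∑' j, (Real.sqrt (lam j) * ‖ιj j y‖) * (Real.sqrt (lam j) * ‖φ j w‖) :=
          Summable.tsum_le_tsum (fun j => hnormterm j _ _) hns hcs
      _ ≤ Real.sqrt (∑' j, (Real.sqrt (lam j) * ‖ιj j y‖) ^ 2) *
            Real.sqrt (∑' j, (Real.sqrt (lam j) * ‖φ j w‖) ^ 2) := hcb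
      _ ≤ ‖ι y‖ * ‖w‖ := by
          rw [e1, Real.sqrt_sq (norm_nonneg _)]
          refine mul_le_mul_of_nonneg_left ?_ (norm_nonneg _)
          exact (Real.sqrt_le_sqrt e2).trans_eq (Real.sqrt_sq (norm_nonneg _))
  -- the key identity:  ⟪ι y, w⟫ = ∑ λ_j ⟪ιⱼ y, φⱼ w⟫ for all w ∈ F
  have hD : ∀ (y : E) (w : F),
      HasSum (fun j => (lam j : ℂ) * ⟪ιj j y, φ j w⟫_ℂ) ⟪ι y, w⟫_ℂ := by
    intro y w
    have hScont : Continuous (fun w : F => ∑' j, (lam j : ℂ) * ⟪ιj j y, φ j w⟫_ℂ) := by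
      refine (LipschitzWith.of_dist_le_mul (K := ‖ι y‖₊) fun w₁ w₂ => ?_).continuous
      rw [dist_eq_norm, dist_eq_norm]
      have hsub : (∑' j, (lam j : ℂ) * ⟪ιj j y, φ j w₁⟫_ℂ)
          - (∑' j, (lam j : ℂ) * ⟪ιj j y, φ j w₂⟫_ℂ)
          = ∑' j, (lam j : ℂ) * ⟪ιj j y, φ j (w₁ - w₂)⟫_ℂ := by
        rw [← Summable.tsum_sub (hDsummable y w₁) (hDsummable y w₂)]
        exact tsum_congr fun j => by rw [map_sub, inner_sub_right, mul_sub]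
      rw [hsub, coe_nnnorm]
      exact hDbound y (w₁ - w₂)
    have heq : ∑' j, (lam j : ℂ) * ⟪ιj j y, φ j w⟫_ℂ = ⟪ι y, w⟫_ℂ := by
      refine DenseRange.induction_on hι w ?_ fun a => ?_
      · exact isClosed_eq hScont (continuous_const.inner continuous_id)
      · simp only [hφ]
        exact (hB y a).tsum_eq
    rw [← heq]
    exact (hDsummable y w).hasSum
  -- now prove the set equality
  ext z
  simp only [Set.mem_setOf_eq]
  constructor
  · -- easy direction
    intro hz
    obtain ⟨yseq, hymem, hylim⟩ := mem_closure_iff_seq_limit.mp hz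
    choose x hxL hxeq using hymem
    refine ⟨x, hxL, ?_, ?_⟩
    · have hb : BddAbove (Set.range fun n => ‖ι (x n)‖) := by
        have ht : Tendsto (fun n => ‖ι (x n)‖) atTop (nhds ‖z‖) := by
          simp only [hxeq]
          exact hylim.norm
        exact ht.bddAbove_range
      obtain ⟨C, hC⟩ := hb
      exact ⟨C, fun k => hC ⟨k, rfl⟩⟩
    · intro j
      have ht : Tendsto (fun k => φ j (yseq k)) atTop (nhds (φ j z)) :=
        ((φ j).continuous.tendsto z).comp hylim
      simp only [← hxeq, hφ] at ht
      exact ht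
  · -- hard direction
    rintro ⟨x, hxL, ⟨C, hC⟩, hxconv⟩
    set M : ℝ := max C ‖z‖ with hMdef
    have hM0 : (0:ℝ) ≤ M := le_trans (norm_nonneg z) (le_max_right _ _)
    have hCM : ∀ k, ‖ι (x k)‖ ≤ M := fun k => (hC k).trans (le_max_left _ _)
    have hzM : ‖z‖ ≤ M := le_max_right _ _
    -- weak convergence against elements of the dense range
    have weak1 : ∀ y : E, Tendsto (fun k => (⟪ι y, ι (x k)⟫_ℂ)) atTop (nhds ⟪ι y, z⟫_ℂ) := by
      intro y
      rw [Metric.tendsto_atTop]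
      intro ε hε
      have hM1 : (0:ℝ) < M + 1 := by linarith
      set δ : ℝ := ε / (4 * (M + 1)) with hδdef
      have hδpos : 0 < δ := div_pos hε (by linarith)
      -- choose a tail index N
      have htail0 := tendsto_sum_nat_add (fun j => lam j * ‖ιj j y‖ ^ 2)
      obtain ⟨N, hN0⟩ := Metric.tendsto_atTop.mp htail0 (δ ^ 2) (pow_pos hδpos 2)
      have hNtail : ∑' j, lam (j + N) * ‖ιj (j + N) y‖ ^ 2 < δ ^ 2 := by
        have h := hN0 N le_rfl
        rw [dist_zero_right, Real.norm_eq_abs] at h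
        exact lt_of_le_of_lt (le_abs_self _) h
      have hsqrtN : Real.sqrt (∑' j, lam (j + N) * ‖ιj (j + N) y‖ ^ 2) ≤ δ :=
        (Real.sqrt_le_sqrt hNtail.le).trans_eq (Real.sqrt_sq hδpos.le)
      -- uniform tail bound
      have keytail : ∀ (c : ℕ → ℂ) (g : ℕ → ℝ), (∀ j, 0 ≤ g j) →
          Summable (fun j => lam j * g j ^ 2) → (∑' j, lam j * g j ^ 2) ≤ M ^ 2 →
          (∀ j, ‖c j‖ ≤ (Real.sqrt (lam j) * ‖ιj j y‖) * (Real.sqrt (lam j) * g j)) →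
          ‖∑' j, c (j + N)‖ ≤ δ * M := by
        intro c g hg hgs hgle hcle
        have hf2 : Summable (fun j => (Real.sqrt (lam (j + N)) * ‖ιj (j + N) y‖) ^ 2) :=
          (summable_nat_add_iff (f := fun j => (Real.sqrt (lam j) * ‖ιj j y‖) ^ 2) N).2 (hsqf y)
        have hg2 : Summable (fun j => (Real.sqrt (lam (j + N)) * g (j + N)) ^ 2) := by
          refine (summable_nat_add_iff (f := fun j => (Real.sqrt (lam j) * g j) ^ 2) N).2 ?_
          exact (summable_congr fun j => by rw [mul_pow, Real.sq_sqrt (hlam j).le]).mpr hgs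
        obtain ⟨hcs, hcb⟩ := tsum_cs (f := fun j => Real.sqrt (lam (j + N)) * ‖ιj (j + N) y‖)
          (g := fun j => Real.sqrt (lam (j + N)) * g (j + N))
          (fun j => mul_nonneg (Real.sqrt_nonneg _) (norm_nonneg _))
          (fun j => mul_nonneg (Real.sqrt_nonneg _) (hg _)) hf2 hg2
        have hns : Summable (fun j => ‖c (j + N)‖) :=
          Summable.of_nonneg_of_le (fun j => norm_nonneg _) (fun j => hcle _) hcs
        have e1 : ∑' j, (Real.sqrt (lam (j + N)) * ‖ιj (j + N) y‖) ^ 2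
            = ∑' j, lam (j + N) * ‖ιj (j + N) y‖ ^ 2 :=
          tsum_congr fun j => by rw [mul_pow, Real.sq_sqrt (hlam _).le]
        have e2 : ∑' j, (Real.sqrt (lam (j + N)) * g (j + N)) ^ 2 ≤ M ^ 2 := by
          rw [tsum_congr (fun j => by rw [mul_pow, Real.sq_sqrt (hlam _).le])]
          have hfull := Summable.sum_add_tsum_nat_add (f := fun j => lam j * g j ^ 2) N hgs
          have hhead : 0 ≤ ∑ i ∈ Finset.range N, lam i * g i ^ 2 :=
            Finset.sum_nonneg fun i _ => mul_nonneg (hlam i).le (sq_nonneg _)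
          linarith
        calc ‖∑' j, c (j + N)‖ ≤ ∑' j, ‖c (j + N)‖ := norm_tsum_le_tsum_norm hns
          _ ≤ ∑' j, (Real.sqrt (lam (j + N)) * ‖ιj (j + N) y‖) *
                (Real.sqrt (lam (j + N)) * g (j + N)) :=
              Summable.tsum_le_tsum (fun j => hcle _) hns hcs
          _ ≤ Real.sqrt (∑' j, (Real.sqrt (lam (j + N)) * ‖ιj (j + N) y‖) ^ 2) *
                Real.sqrt (∑' j, (Real.sqrt (lam (j + N)) * g (j + N)) ^ 2) := hcb
          _ ≤ δ * M := by
              refine mul_le_mul ?_ ?_ (Real.sqrt_nonneg _) hδpos.le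
              · rw [e1]; exact hsqrtN
              · exact (Real.sqrt_le_sqrt e2).trans_eq (Real.sqrt_sq hM0)
      -- convergence of the finite part
      have hpt : ∀ j : ℕ, Tendsto (fun k => (lam j : ℂ) * ⟪ιj j y, ιj j (x k)⟫_ℂ
          - (lam j : ℂ) * ⟪ιj j y, φ j z⟫_ℂ) atTop (nhds 0) := by
        intro j
        have h1 : Tendsto (fun k => ⟪ιj j y, ιj j (x k)⟫_ℂ) atTop
            (nhds ⟪ιj j y, φ j z⟫_ℂ) := tendsto_const_nhds.inner (hxconv j)
        have h2 := (h1.const_mul ((lam j : ℂ))).sub_const ((lam j : ℂ) * ⟪ιj j y, φ j z⟫_ℂ)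
        simpa using h2
      have hfin : Tendsto (fun k => ∑ j ∈ Finset.range N,
          ((lam j : ℂ) * ⟪ιj j y, ιj j (x k)⟫_ℂ - (lam j : ℂ) * ⟪ιj j y, φ j z⟫_ℂ))
          atTop (nhds 0) := by
        have h := tendsto_finset_sum (Finset.range N) (fun j _ => hpt j)
        simpa using h
      obtain ⟨K, hK⟩ := Metric.tendsto_atTop.mp hfin (ε / 4) (by linarith)
      refine ⟨K, fun k hk => ?_⟩
      have hsplit1 : ⟪ι y, ι (x k)⟫_ℂ
          = (∑ j ∈ Finset.range N, (lam j : ℂ) * ⟪ιj j y, ιj j (x k)⟫_ℂ)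
            + ∑' j, (lam (j + N) : ℂ) * ⟪ιj (j + N) y, ιj (j + N) (x k)⟫_ℂ := by
        have h := Summable.sum_add_tsum_nat_add
          (f := fun j => (lam j : ℂ) * ⟪ιj j y, ιj j (x k)⟫_ℂ) N (hB y (x k)).summable
        rw [(hB y (x k)).tsum_eq] at h
        exact h.symm
      have hsplit2 : ⟪ι y, z⟫_ℂ
          = (∑ j ∈ Finset.range N, (lam j : ℂ) * ⟪ιj j y, φ j z⟫_ℂ)
            + ∑' j, (lam (j + N) : ℂ) * ⟪ιj (j + N) y, φ (j + N) z⟫_ℂ := by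
        have h := Summable.sum_add_tsum_nat_add
          (f := fun j => (lam j : ℂ) * ⟪ιj j y, φ j z⟫_ℂ) N (hDsummable y z)
        rw [(hD y z).tsum_eq] at h
        exact h.symm
      rw [dist_eq_norm, hsplit1, hsplit2]
      have htailA : ‖∑' j, (lam (j + N) : ℂ) * ⟪ιj (j + N) y, ιj (j + N) (x k)⟫_ℂ‖
          ≤ δ * M := by
        refine keytail (fun j => (lam j : ℂ) * ⟪ιj j y, ιj j (x k)⟫_ℂ)
          (fun j => ‖ιj j (x k)‖) (fun j => norm_nonneg _)
          (hA (x k)).summable ?_ (fun j => hnormterm j _ _)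
        rw [(hA (x k)).tsum_eq]
        exact pow_le_pow_left₀ (norm_nonneg _) (hCM k) 2
      have htailB : ‖∑' j, (lam (j + N) : ℂ) * ⟪ιj (j + N) y, φ (j + N) z⟫_ℂ‖
          ≤ δ * M := by
        refine keytail (fun j => (lam j : ℂ) * ⟪ιj j y, φ j z⟫_ℂ)
          (fun j => ‖φ j z‖) (fun j => norm_nonneg _)
          (hCsummable z) ?_ (fun j => hnormterm j _ _)
        exact (hCtsum z).trans (pow_le_pow_left₀ (norm_nonneg _) hzM 2)
      have key3 : ∀ S1 S2 T1 T2 : ℂ, ‖(S1 + T1) - (S2 + T2)‖ ≤ ‖S1 - S2‖ + ‖T1‖ + ‖T2‖ := by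
        intro S1 S2 T1 T2
        have e : (S1 + T1) - (S2 + T2) = ((S1 - S2) + T1) - T2 := by ring
        rw [e]
        exact (norm_sub_le _ _).trans (add_le_add_left (norm_add_le _ _) _)
      refine lt_of_le_of_lt (key3 _ _ _ _) ?_
      have hsum_sub : ‖(∑ j ∈ Finset.range N, (lam j : ℂ) * ⟪ιj j y, ιj j (x k)⟫_ℂ)
          - ∑ j ∈ Finset.range N, (lam j : ℂ) * ⟪ιj j y, φ j z⟫_ℂ‖ < ε / 4 := by
        rw [← Finset.sum_sub_distrib]
        have h := hK k hk
        rwa [dist_zero_right] at h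
      have hδM : δ * M ≤ ε / 4 := by
        have h1 : δ * M ≤ δ * (M + 1) := by nlinarith
        have hne : M + 1 ≠ 0 := by linarith
        have h2 : δ * (M + 1) = ε / 4 := by
          rw [hδdef]; field_simp
        linarith
      linarith
    -- weak convergence against arbitrary elements of F
    have weak2 : ∀ w : F, Tendsto (fun k => (⟪w, ι (x k)⟫_ℂ)) atTop (nhds ⟪w, z⟫_ℂ) := by
      intro w
      rw [Metric.tendsto_atTop]
      intro ε hε
      have hM1 : (0:ℝ) < M + 1 := by linarith
      obtain ⟨y, hy⟩ := Metric.denseRange_iff.mp hι w (ε / (3 * (M + 1)))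
        (div_pos hε (by linarith))
      obtain ⟨K, hK⟩ := Metric.tendsto_atTop.mp (weak1 y) (ε / 3) (by linarith)
      refine ⟨K, fun k hk => ?_⟩
      rw [dist_eq_norm]
      have e1 : ⟪w, ι (x k)⟫_ℂ - ⟪w, z⟫_ℂ
          = (⟪w - ι y, ι (x k)⟫_ℂ - ⟪w - ι y, z⟫_ℂ)
            + (⟪ι y, ι (x k)⟫_ℂ - ⟪ι y, z⟫_ℂ) := by
        simp only [inner_sub_left]
        ring
      rw [e1]
      have hwy : ‖w - ι y‖ ≤ ε / (3 * (M + 1)) := by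
        rw [← dist_eq_norm]
        exact hy.le
      have hb1 : ‖⟪w - ι y, ι (x k)⟫_ℂ‖ ≤ ε / (3 * (M + 1)) * M :=
        (norm_inner_le_norm _ _).trans
          (mul_le_mul hwy (hCM k) (norm_nonneg _) (by positivity))
      have hb2 : ‖⟪w - ι y, z⟫_ℂ‖ ≤ ε / (3 * (M + 1)) * M :=
        (norm_inner_le_norm _ _).trans
          (mul_le_mul hwy hzM (norm_nonneg _) (by positivity))
      have hb3 : ‖⟪ι y, ι (x k)⟫_ℂ - ⟪ι y, z⟫_ℂ‖ < ε / 3 := by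
        have h := hK k hk
        rwa [dist_eq_norm] at h
      have hbound : ε / (3 * (M + 1)) * M ≤ ε / 3 := by
        have hne : M + 1 ≠ 0 := by linarith
        have h2 : ε / (3 * (M + 1)) * (M + 1) = ε / 3 := by field_simp
        nlinarith [div_pos hε (show (0:ℝ) < 3 * (M + 1) by linarith)]
      calc ‖(⟪w - ι y, ι (x k)⟫_ℂ - ⟪w - ι y, z⟫_ℂ) + (⟪ι y, ι (x k)⟫_ℂ - ⟪ι y, z⟫_ℂ)‖
          ≤ ‖⟪w - ι y, ι (x k)⟫_ℂ - ⟪w - ι y, z⟫_ℂ‖ + ‖⟪ι y, ι (x k)⟫_ℂ - ⟪ι y, z⟫_ℂ‖ :=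
            norm_add_le _ _
        _ ≤ (‖⟪w - ι y, ι (x k)⟫_ℂ‖ + ‖⟪w - ι y, z⟫_ℂ‖)
              + ‖⟪ι y, ι (x k)⟫_ℂ - ⟪ι y, z⟫_ℂ‖ :=
            add_le_add_left (norm_sub_le _ _) _
        _ < ε := by linarith
    -- conclude via Hahn–Banach separation (Mazur's argument)
    by_contra hznot
    have hconvex : Convex ℝ (ι '' L) := by
      have h2 := hL.linear_image (ι.restrictScalars ℝ)
      simpa using h2
    obtain ⟨f, u, hfz, hfb⟩ := RCLike.geometric_hahn_banach_point_closed (𝕜 := ℂ)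
      hconvex.closure isClosed_closure hznot
    set v : F := (InnerProductSpace.toDual ℂ F).symm f with hv
    have hval : ∀ p : F, ⟪v, p⟫_ℂ = f p := fun p => InnerProductSpace.toDual_symm_apply
    have hre : Tendsto (fun k => RCLike.re (f (ι (x k)))) atTop (nhds (RCLike.re (f z))) := by
      simp only [← hval]
      exact (RCLike.continuous_re.tendsto _).comp (weak2 v)
    have hge : u ≤ RCLike.re (f z) := by
      refine ge_of_tendsto hre (Eventually.of_forall fun k => ?_)
      exact (hfb _ (subset_closure ⟨x k, hxL k, rfl⟩)).le
    linarith
end
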